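/- Every compact metrizable subset of the Stone–Čech compactification βℕ of the discrete space ℕ is finite. Equivalently, every closed subset of βℕ that is metrizable (in the subspace topology) is finite. -/

import Mathlib

open Topology Filter Set

/-- βℕ has no nontrivial convergent sequences. -/
theorem stoneCech_no_seq (v : ℕ → StoneCech ℕ) (x : StoneCech ℕ)
    (hv : Filter.Tendsto v atTop (𝓝 x)) (hne : ∀ n, v n ≠ x) : False := by
  haveI : ExtremallyDisconnected (StoneCech ℕ) :=
    CompactT2.Projective.extremallyDisconnected StoneCech.projective
  -- clopen sets separating `v n` from `x`
  have hsep : ∀ n, ∃ U : Set (StoneCech ℕ), IsClopen U ∧ v n ∈ U ∧ x ∈ Uᶜ := fun n =>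
    exists_isClopen_of_totally_separated (hne n)
  choose C hCcl hvC hxC using hsep
  -- a "next index" function escaping any finite union of the `C i`'s
  have step : ∀ (F : Finset ℕ) (N : ℕ), ∃ n, N < n ∧ ∀ i ∈ F, v n ∉ C i := by
    intro F N
    have hop : IsOpen (⋂ i ∈ F, (C i)ᶜ) :=
      isOpen_biInter_finset fun i _ => (hCcl i).isClosed.isOpen_compl
    have hx : x ∈ ⋂ i ∈ F, (C i)ᶜ := by
      simp only [mem_iInter]; intro i _; exact hxC i
    have := (hv.eventually (hop.mem_nhds hx)).and (eventually_gt_atTop N)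
    obtain ⟨n, hn1, hn2⟩ := this.exists
    refine ⟨n, hn2, fun i hi => ?_⟩
    have hn1' : v n ∈ ⋂ i ∈ F, (C i)ᶜ := hn1
    exact mem_iInter₂.mp hn1' i hi
  choose next hnext_gt hnext_notin using step
  -- recursively extracted indices
  let b : ℕ → ℕ × Finset ℕ := fun k => Nat.rec (next ∅ 0, {next ∅ 0})
    (fun _ p => (next p.2 p.1, insert (next p.2 p.1) p.2)) k
  set a : ℕ → ℕ := fun k => (b k).1 with ha
  set F : ℕ → Finset ℕ := fun k => (b k).2 with hF
  have hbs : ∀ k, a (k+1) = next (F k) (a k) := fun k => rfl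
  have hFs : ∀ k, F (k+1) = insert (a (k+1)) (F k) := fun k => rfl
  have hmono : StrictMono a := strictMono_nat_of_lt_succ fun k => by
    rw [hbs]; exact hnext_gt (F k) (a k)
  have hmemF : ∀ j k, j ≤ k → a j ∈ F k := by
    intro j k
    induction k with
    | zero => intro hj; interval_cases j; exact Finset.mem_singleton_self _
    | succ k ih =>
      intro hj
      rcases eq_or_lt_of_le hj with h | h
      · rw [hFs, h]; exact Finset.mem_insert_self _ _
      · rw [hFs]; exact Finset.mem_insert_of_mem (ih (by omega))
  have hnot : ∀ j k, j < k → v (a k) ∉ C (a j) := by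
    intro j k hjk
    obtain ⟨m, rfl⟩ : ∃ m, k = m + 1 := ⟨k - 1, by omega⟩
    rw [hbs]
    exact hnext_notin (F m) (a m) (a j) (hmemF j m (by omega))
  -- pairwise disjoint open sets
  set D : ℕ → Set (StoneCech ℕ) :=
    fun k => C (a k) ∩ ⋂ j ∈ Finset.range k, (C (a j))ᶜ with hD
  have hDopen : ∀ k, IsOpen (D k) := fun k =>
    (hCcl (a k)).isOpen.inter (isOpen_biInter_finset fun j _ => (hCcl (a j)).isClosed.isOpen_compl)
  have hvD : ∀ k, v (a k) ∈ D k := by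
    intro k
    refine ⟨hvC (a k), ?_⟩
    simp only [mem_iInter, Finset.mem_range, mem_compl_iff]
    intro j hj
    exact hnot j k hj
  have hDdisj : ∀ j k, j < k → Disjoint (D j) (D k) := by
    intro j k hjk
    refine Set.disjoint_left.mpr fun z hzj hzk => ?_
    have h1 : z ∈ C (a j) := hzj.1
    have h2 : z ∈ (C (a j))ᶜ := by
      have := hzk.2
      simp only [mem_iInter, Finset.mem_range, mem_compl_iff] at this
      exact this j hjk
    exact h2 h1
  set A : Set (StoneCech ℕ) := ⋃ k, D (2*k) with hA
  set B : Set (StoneCech ℕ) := ⋃ k, D (2*k+1) with hB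
  have hABdisj : Disjoint A B := by
    refine Set.disjoint_left.mpr fun z hzA hzB => ?_
    obtain ⟨k, hk⟩ := mem_iUnion.mp hzA
    obtain ⟨k', hk'⟩ := mem_iUnion.mp hzB
    rcases lt_trichotomy (2*k) (2*k'+1) with h | h | h
    · exact Set.disjoint_left.mp (hDdisj _ _ h) hk hk'
    · omega
    · exact Set.disjoint_left.mp (hDdisj _ _ h) hk' hk
  have h2k : Filter.Tendsto (fun k => 2*k) atTop atTop :=
    tendsto_atTop_atTop.mpr fun N => ⟨N, fun n hn => by omega⟩
  have h2k1 : Filter.Tendsto (fun k => 2*k+1) atTop atTop :=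
    tendsto_atTop_atTop.mpr fun N => ⟨N, fun n hn => by omega⟩
  have hxA : x ∈ closure A :=
    mem_closure_of_tendsto (hv.comp ((hmono.tendsto_atTop).comp h2k))
      (Eventually.of_forall fun k => mem_iUnion.mpr ⟨k, hvD (2*k)⟩)
  have hxB : x ∈ closure B :=
    mem_closure_of_tendsto (hv.comp ((hmono.tendsto_atTop).comp h2k1))
      (Eventually.of_forall fun k => mem_iUnion.mpr ⟨k, hvD (2*k+1)⟩)
  exact Set.disjoint_left.mp
    (ExtremallyDisconnected.disjoint_closure_of_disjoint_isOpen hABdisj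
      (isOpen_iUnion fun k => hDopen (2*k)) (isOpen_iUnion fun k => hDopen (2*k+1))) hxA hxB

theorem compact_metrizable_subset_of_stoneCech_finite :
    (∀ s : Set (StoneCech ℕ), IsCompact s → TopologicalSpace.MetrizableSpace s →
      s.Finite) ∧
    (∀ s : Set (StoneCech ℕ), IsClosed s → TopologicalSpace.MetrizableSpace s →
      s.Finite) := by
  have main : ∀ s : Set (StoneCech ℕ), IsCompact s → TopologicalSpace.MetrizableSpace s →
      s.Finite := by
    intro s hcomp hmet
    by_contra hfin
    have hinf : s.Infinite := hfin
    haveI : CompactSpace s := isCompact_iff_compactSpace.mp hcomp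
    letI : MetricSpace s := TopologicalSpace.metrizableSpaceMetric s
    haveI : SeqCompactSpace s := compactSpace_iff_seqCompactSpace.mp inferInstance
    set f : ℕ ↪ s := hinf.natEmbedding
    obtain ⟨x₀, φ, hφ, htend⟩ := SeqCompactSpace.tendsto_subseq (fun n => f n)
    set w : ℕ → s := (fun n => f n) ∘ φ with hw
    have hwinj : Function.Injective w := f.injective.comp hφ.injective
    have hev : ∀ᶠ n in atTop, w n ≠ x₀ := by
      by_cases h : ∃ N, w N = x₀
      · obtain ⟨N, hN⟩ := h
        filter_upwards [eventually_gt_atTop N] with n hn hc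
        exact absurd (hwinj (hc.trans hN.symm)) (by omega)
      · exact Eventually.of_forall fun n => fun hc => h ⟨n, hc⟩
    obtain ⟨ψ, hψ, hψne⟩ := extraction_of_eventually_atTop hev
    refine stoneCech_no_seq (fun n => (w (ψ n) : StoneCech ℕ)) (x₀ : StoneCech ℕ)
      ((continuous_subtype_val.tendsto x₀).comp (htend.comp hψ.tendsto_atTop)) ?_
    intro n hc
    exact hψne n (Subtype.val_injective hc)
  exact ⟨main, fun s hcl hmet => main s hcl.isCompact hmet⟩
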